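/- Fix H > 0 with H ≠ 1/2 and define c_H(a,b) := ∫₀^{min(a,b)} (a−u)^{H−1/2} (b−u)^{H−1/2} du for a, b > 0. Then there exist 0 < s < t < u such that c_H(s,u) · c_H(t,t) ≠ c_H(s,t) · c_H(t,u). -/

import Mathlib

open MeasureTheory Set Filter intervalIntegral Topology

/-- Covariance function of the Riemann–Liouville process
`Y_t = ∫₀ᵗ (t−s)^{H−1/2} dB_s`. -/
noncomputable def cH (H a b : ℝ) : ℝ :=
  ∫ u in (0:ℝ)..(min a b), (a - u) ^ (H - 1/2) * (b - u) ^ (H - 1/2)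

lemma integral_sub_rpow {a r : ℝ} (hr : -1 < r) :
    ∫ u in (0:ℝ)..a, (a - u) ^ r = a ^ (r + 1) / (r + 1) := by
  rw [intervalIntegral.integral_comp_sub_left (fun x => x ^ r) a]
  simp only [sub_zero, sub_self]
  rw [integral_rpow (Or.inl hr), Real.zero_rpow (by linarith), sub_zero]

lemma intint_sub_rpow {a r : ℝ} (hr : -1 < r) :
    IntervalIntegrable (fun u => (a - u) ^ r) volume 0 a := by
  simpa using (intervalIntegrable_rpow' hr (a := a) (b := 0)).comp_sub_left a

lemma cH_bounds {H a b : ℝ} (hα : -1 < H - 1/2) (ha : 0 < a) (hab : a < b) :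
    min ((b-a)^(H-1/2)) (b^(H-1/2)) * (a^(H+1/2)/(H+1/2)) ≤ cH H a b ∧
    cH H a b ≤ max ((b-a)^(H-1/2)) (b^(H-1/2)) * (a^(H+1/2)/(H+1/2)) := by
  set α := H - 1/2 with hαdef
  have hba : 0 < b - a := by linarith
  have h1 : IntervalIntegrable (fun u => (a-u)^α) volume 0 a := intint_sub_rpow hα
  have hcont : ContinuousOn (fun u => (b-u)^α) (Set.uIcc 0 a) := by
    apply ContinuousOn.rpow_const (continuousOn_const.sub continuousOn_id)
    intro x hx
    rw [Set.uIcc_of_le ha.le] at hx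
    exact Or.inl (by nlinarith [hx.2] : b - x ≠ 0)
  have h_int : IntervalIntegrable (fun u => (a-u)^α * (b-u)^α) volume 0 a :=
    h1.mul_continuousOn hcont
  have key : ∀ M : ℝ, (∀ x ∈ Set.Icc 0 a, (b-x)^α ≤ M) →
      cH H a b ≤ M * (a^(α+1)/(α+1)) := by
    intro M hM
    have hmono : ∀ x ∈ Set.Icc 0 a, (a-x)^α * (b-x)^α ≤ (a-x)^α * M := by
      intro x hx
      exact mul_le_mul_of_nonneg_left (hM x hx) (Real.rpow_nonneg (by linarith [hx.2]) _)
    have := intervalIntegral.integral_mono_on ha.le h_int (h1.mul_const M) hmono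
    rw [cH, min_eq_left hab.le]
    calc (∫ u in (0:ℝ)..a, (a-u)^α * (b-u)^α) ≤ ∫ u in (0:ℝ)..a, (a-u)^α * M := this
      _ = (∫ u in (0:ℝ)..a, (a-u)^α) * M := by rw [intervalIntegral.integral_mul_const]
      _ = M * (a^(α+1)/(α+1)) := by rw [integral_sub_rpow hα]; ring
  have key' : ∀ m : ℝ, (∀ x ∈ Set.Icc 0 a, m ≤ (b-x)^α) →
      m * (a^(α+1)/(α+1)) ≤ cH H a b := by
    intro m hm
    have hmono : ∀ x ∈ Set.Icc 0 a, (a-x)^α * m ≤ (a-x)^α * (b-x)^α := by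
      intro x hx
      exact mul_le_mul_of_nonneg_left (hm x hx) (Real.rpow_nonneg (by linarith [hx.2]) _)
    have := intervalIntegral.integral_mono_on ha.le (h1.mul_const m) h_int hmono
    rw [cH, min_eq_left hab.le]
    calc m * (a^(α+1)/(α+1)) = (∫ u in (0:ℝ)..a, (a-u)^α) * m := by
          rw [integral_sub_rpow hα]; ring
      _ = ∫ u in (0:ℝ)..a, (a-u)^α * m := by rw [intervalIntegral.integral_mul_const]
      _ ≤ _ := this
  have hub : ∀ x ∈ Set.Icc 0 a, (b-x)^α ≤ max ((b-a)^α) (b^α) := by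
    intro x hx
    rcases le_or_gt 0 α with h | h
    · exact le_max_of_le_right (Real.rpow_le_rpow (by linarith [hx.2]) (by linarith [hx.1]) h)
    · exact le_max_of_le_left (Real.rpow_le_rpow_of_nonpos hba (by linarith [hx.2]) h.le)
  have hlb : ∀ x ∈ Set.Icc 0 a, min ((b-a)^α) (b^α) ≤ (b-x)^α := by
    intro x hx
    rcases le_or_gt 0 α with h | h
    · exact min_le_of_left_le (Real.rpow_le_rpow hba.le (by linarith [hx.2]) h)
    · refine min_le_of_right_le (Real.rpow_le_rpow_of_nonpos ?_ (by linarith [hx.1]) h.le)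
      nlinarith [hx.2]
  refine ⟨?_, ?_⟩
  · have : a ^ (α + 1) / (α + 1) = a ^ (H + 1/2) / (H + 1/2) := by
      rw [hαdef, show H - 1/2 + 1 = H + 1/2 by ring]
    rw [← this]; exact key' _ hlb
  · have : a ^ (α + 1) / (α + 1) = a ^ (H + 1/2) / (H + 1/2) := by
      rw [hαdef, show H - 1/2 + 1 = H + 1/2 by ring]
    rw [← this]; exact key _ hub

lemma cH_self {H t : ℝ} (ht : 0 < t) (hne : H ≠ 1/2) (hα : -1 < 2*H - 1) :
    cH H t t = t ^ (2*H) / (2*H) := by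
  rw [cH, min_self]
  have hcongr : Set.EqOn (fun u => (t-u)^(H-1/2) * (t-u)^(H-1/2))
      (fun u => (t-u)^(2*H-1)) (Set.uIcc 0 t) := by
    intro u hu
    rw [Set.uIcc_of_le ht.le] at hu
    have h := Real.rpow_add' (x := t - u) (y := H - 1/2) (z := H - 1/2)
      (by linarith [hu.2]) (by intro h; apply hne; linarith)
    simp only
    rw [← h, show H - 1/2 + (H - 1/2) = 2*H - 1 by ring]
  rw [intervalIntegral.integral_congr hcongr, integral_sub_rpow hα,
    show 2*H - 1 + 1 = 2*H by ring]

lemma exists_eps (F : ℝ → ℝ) (hF : ContinuousAt F 0) (h0 : 0 < F 0) :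
    ∃ ε : ℝ, 0 < ε ∧ ε < 1 ∧ 0 < F ε := by
  have h1 : F ⁻¹' Set.Ioi 0 ∈ 𝓝 (0:ℝ) := hF (Ioi_mem_nhds h0)
  have h2 : Set.Ioo (0:ℝ) 1 ∈ 𝓝[>] (0:ℝ) :=
    Ioo_mem_nhdsGT_of_mem (by constructor <;> norm_num)
  obtain ⟨ε, hε1, hε2⟩ := Filter.nonempty_of_mem
    (Filter.inter_mem (nhdsWithin_le_nhds h1) h2)
  exact ⟨ε, hε2.1, hε2.2, hε1⟩

/-- Failure of Doob's Markov-property criterion for the covariance of the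
Riemann–Liouville process when `H ≠ 1/2`: there are times `0 < s < t < u`
with `c_H(s,u) c_H(t,t) ≠ c_H(s,t) c_H(t,u)`. -/
theorem stmt_13 (H : ℝ) (hH : 0 < H) (hH' : H ≠ 1/2) :
    ∃ s t u : ℝ, 0 < s ∧ s < t ∧ t < u ∧
      cH H s u * cH H t t ≠ cH H s t * cH H t u := by
  have hα : -1 < H - 1/2 := by linarith
  have hp : (0:ℝ) < H + 1/2 := by linarith
  have h2H : (0:ℝ) < 2*H := by linarith

  rcases lt_or_gt_of_ne hH' with hlt | hgt
  · -- Case H < 1/2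
    have c1 : ContinuousAt (fun ε : ℝ => (1-ε*ε)^(H-1/2)) 0 :=
      ContinuousAt.rpow_const (continuousAt_const.sub (continuousAt_id.mul continuousAt_id))
        (Or.inl (by norm_num))
    have c2 : ContinuousAt (fun ε : ℝ => (1-ε)^(H-1/2)) 0 :=
      ContinuousAt.rpow_const (continuousAt_const.sub continuousAt_id) (Or.inl (by norm_num))
    obtain ⟨ε, hε0, hε1, hF⟩ := exists_eps
      (fun ε => min ((1-ε*ε)^(H-1/2)) 1 * (H+1/2) - 2*H*(max ((1-ε)^(H-1/2)) 1)^2)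
      (((c1.min continuousAt_const).mul continuousAt_const).sub
        (Tendsto.mul continuousAt_const ((c2.max continuousAt_const).pow 2)))
      (by norm_num [Real.one_rpow]; linarith)
    have hsε : ε*ε < ε := by nlinarith
    have hs0 : 0 < ε*ε := by positivity
    have hs1 : ε*ε < 1 := by nlinarith
    refine ⟨ε*ε, ε, 1, hs0, hsε, hε1, ?_⟩
    obtain ⟨hA1, _⟩ := cH_bounds hα hs0 hs1
    obtain ⟨hC1, hC2⟩ := cH_bounds hα hs0 hsε
    obtain ⟨hD1, hD2⟩ := cH_bounds hα hε0 hε1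
    simp only [Real.one_rpow] at hA1 hD1 hD2
    have hB : cH H ε ε = ε^(2*H)/(2*H) := cH_self hε0 hH' (by linarith)
    have hεα : (0:ℝ) < ε^(H-1/2) := Real.rpow_pos_of_pos hε0 _
    have hmaxC : max ((ε-ε*ε)^(H-1/2)) (ε^(H-1/2))
        = ε^(H-1/2) * max ((1-ε)^(H-1/2)) 1 := by
      have h1 : (ε-ε*ε)^(H-1/2) = ε^(H-1/2) * (1-ε)^(H-1/2) := by
        rw [show ε - ε*ε = ε*(1-ε) by ring, Real.mul_rpow hε0.le (by linarith)]
      have h2 := mul_max_of_nonneg ((1-ε)^(H-1/2)) 1 hεα.le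
      rw [h1, h2, mul_one]
    rw [hmaxC] at hC2
    have hsp : (ε*ε)^(H+1/2) = ε^(H+1/2) * ε^(H+1/2) := Real.mul_rpow hε0.le hε0.le
    have hD0 : 0 ≤ cH H ε 1 :=
      le_trans (mul_nonneg (le_min (Real.rpow_nonneg (by linarith) _) zero_le_one)
        (div_nonneg (Real.rpow_nonneg hε0.le _) hp.le)) hD1
    have hC2' : 0 ≤ ε^(H-1/2) * max ((1-ε)^(H-1/2)) 1 * ((ε*ε)^(H+1/2)/(H+1/2)) :=
      mul_nonneg (mul_nonneg hεα.le (le_trans zero_le_one (le_max_right _ _)))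
        (div_nonneg (Real.rpow_nonneg hs0.le _) hp.le)
    have hCD : cH H (ε*ε) ε * cH H ε 1 ≤
        (ε^(H-1/2) * max ((1-ε)^(H-1/2)) 1 * ((ε*ε)^(H+1/2)/(H+1/2)))
          * (max ((1-ε)^(H-1/2)) 1 * (ε^(H+1/2)/(H+1/2))) :=
      mul_le_mul hC2 hD2 hD0 hC2'
    have hAB : min ((1-ε*ε)^(H-1/2)) 1 * ((ε*ε)^(H+1/2)/(H+1/2)) * (ε^(2*H)/(2*H))
        ≤ cH H (ε*ε) 1 * cH H ε ε := by
      rw [hB]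
      exact mul_le_mul_of_nonneg_right hA1 (div_nonneg (Real.rpow_nonneg hε0.le _) h2H.le)
    have e1 : ε^(H-1/2) * ((ε*ε)^(H+1/2)/(H+1/2)) * (ε^(H+1/2)/(H+1/2))
        = ε^(4*H+1) * ((H+1/2)⁻¹ * (H+1/2)⁻¹) := by
      rw [hsp, show ε^(H-1/2) * (ε^(H+1/2)*ε^(H+1/2)/(H+1/2)) * (ε^(H+1/2)/(H+1/2))
        = ε^(H-1/2) * ε^(H+1/2) * ε^(H+1/2) * ε^(H+1/2) * ((H+1/2)⁻¹ * (H+1/2)⁻¹) by ring,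
        ← Real.rpow_add hε0, ← Real.rpow_add hε0, ← Real.rpow_add hε0,
        show H-1/2+(H+1/2)+(H+1/2)+(H+1/2) = 4*H+1 by ring]
    have e2 : (ε*ε)^(H+1/2)/(H+1/2) * (ε^(2*H)/(2*H))
        = ε^(4*H+1) * ((H+1/2)⁻¹ * (2*H)⁻¹) := by
      rw [hsp, show ε^(H+1/2)*ε^(H+1/2)/(H+1/2) * (ε^(2*H)/(2*H))
        = ε^(H+1/2)*ε^(H+1/2)*ε^(2*H) * ((H+1/2)⁻¹ * (2*H)⁻¹) by ring,
        ← Real.rpow_add hε0, ← Real.rpow_add hε0,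
        show H+1/2+(H+1/2)+2*H = 4*H+1 by ring]
    have hL : (ε^(H-1/2) * max ((1-ε)^(H-1/2)) 1 * ((ε*ε)^(H+1/2)/(H+1/2)))
          * (max ((1-ε)^(H-1/2)) 1 * (ε^(H+1/2)/(H+1/2)))
        = (max ((1-ε)^(H-1/2)) 1)^2 * (ε^(4*H+1) * ((H+1/2)⁻¹ * (H+1/2)⁻¹)) := by
      rw [← e1]; ring
    have hR : min ((1-ε*ε)^(H-1/2)) 1 * ((ε*ε)^(H+1/2)/(H+1/2)) * (ε^(2*H)/(2*H))
        = min ((1-ε*ε)^(H-1/2)) 1 * (ε^(4*H+1) * ((H+1/2)⁻¹ * (2*H)⁻¹)) := by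
      rw [← e2]; ring
    have hP : (0:ℝ) < ε^(4*H+1) := Real.rpow_pos_of_pos hε0 _
    have fpos : (0:ℝ) < ε^(4*H+1) * ((H+1/2)⁻¹ * ((H+1/2)⁻¹ * (2*H)⁻¹)) :=
      mul_pos hP (mul_pos (inv_pos.2 hp) (mul_pos (inv_pos.2 hp) (inv_pos.2 h2H)))
    have h1 : 2*H*((max ((1-ε)^(H-1/2)) 1)^2)
        < min ((1-ε*ε)^(H-1/2)) 1 * (H+1/2) := by linarith
    have hmid : (max ((1-ε)^(H-1/2)) 1)^2 * (ε^(4*H+1) * ((H+1/2)⁻¹ * (H+1/2)⁻¹))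
        < min ((1-ε*ε)^(H-1/2)) 1 * (ε^(4*H+1) * ((H+1/2)⁻¹ * (2*H)⁻¹)) := by
      have eL : (max ((1-ε)^(H-1/2)) 1)^2 * (ε^(4*H+1) * ((H+1/2)⁻¹ * (H+1/2)⁻¹))
          = (2*H*((max ((1-ε)^(H-1/2)) 1)^2))
            * (ε^(4*H+1) * ((H+1/2)⁻¹ * ((H+1/2)⁻¹ * (2*H)⁻¹))) := by
        rw [show (2*H*((max ((1-ε)^(H-1/2)) 1)^2))
            * (ε^(4*H+1) * ((H+1/2)⁻¹ * ((H+1/2)⁻¹ * (2*H)⁻¹)))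
          = ((2*H)*(2*H)⁻¹) * ((max ((1-ε)^(H-1/2)) 1)^2
            * (ε^(4*H+1) * ((H+1/2)⁻¹ * (H+1/2)⁻¹))) by ring,
          mul_inv_cancel₀ h2H.ne', one_mul]
      have eR : min ((1-ε*ε)^(H-1/2)) 1 * (ε^(4*H+1) * ((H+1/2)⁻¹ * (2*H)⁻¹))
          = (min ((1-ε*ε)^(H-1/2)) 1 * (H+1/2))
            * (ε^(4*H+1) * ((H+1/2)⁻¹ * ((H+1/2)⁻¹ * (2*H)⁻¹))) := by
        rw [show (min ((1-ε*ε)^(H-1/2)) 1 * (H+1/2))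
            * (ε^(4*H+1) * ((H+1/2)⁻¹ * ((H+1/2)⁻¹ * (2*H)⁻¹)))
          = ((H+1/2)*(H+1/2)⁻¹) * (min ((1-ε*ε)^(H-1/2)) 1
            * (ε^(4*H+1) * ((H+1/2)⁻¹ * (2*H)⁻¹))) by ring,
          mul_inv_cancel₀ hp.ne', one_mul]
      rw [eL, eR]
      exact mul_lt_mul_of_pos_right h1 fpos
    have hfin : cH H (ε*ε) ε * cH H ε 1 < cH H (ε*ε) 1 * cH H ε ε :=
      lt_of_le_of_lt (hCD.trans_eq hL) (lt_of_lt_of_le (hmid.trans_eq hR.symm) hAB)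
    exact hfin.ne'
  · -- Case H > 1/2
    have c1 : ContinuousAt (fun ε : ℝ => (1-ε*ε)^(H-1/2)) 0 :=
      ContinuousAt.rpow_const (continuousAt_const.sub (continuousAt_id.mul continuousAt_id))
        (Or.inl (by norm_num))
    have c2 : ContinuousAt (fun ε : ℝ => (1-ε)^(H-1/2)) 0 :=
      ContinuousAt.rpow_const (continuousAt_const.sub continuousAt_id) (Or.inl (by norm_num))
    obtain ⟨ε, hε0, hε1, hF⟩ := exists_eps
      (fun ε => 2*H*(min ((1-ε)^(H-1/2)) 1)^2 - max ((1-ε*ε)^(H-1/2)) 1 * (H+1/2))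
      ((Tendsto.mul continuousAt_const ((c2.min continuousAt_const).pow 2)).sub
        ((c1.max continuousAt_const).mul continuousAt_const))
      (by norm_num [Real.one_rpow]; linarith)
    have hsε : ε*ε < ε := by nlinarith
    have hs0 : 0 < ε*ε := by positivity
    have hs1 : ε*ε < 1 := by nlinarith
    refine ⟨ε*ε, ε, 1, hs0, hsε, hε1, ?_⟩
    obtain ⟨_, hA2⟩ := cH_bounds hα hs0 hs1
    obtain ⟨hC1, _⟩ := cH_bounds hα hs0 hsε
    obtain ⟨hD1, _⟩ := cH_bounds hα hε0 hε1
    simp only [Real.one_rpow] at hA2 hD1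
    have hB : cH H ε ε = ε^(2*H)/(2*H) := cH_self hε0 hH' (by linarith)
    have hεα : (0:ℝ) < ε^(H-1/2) := Real.rpow_pos_of_pos hε0 _
    have hminC : min ((ε-ε*ε)^(H-1/2)) (ε^(H-1/2))
        = ε^(H-1/2) * min ((1-ε)^(H-1/2)) 1 := by
      have h1 : (ε-ε*ε)^(H-1/2) = ε^(H-1/2) * (1-ε)^(H-1/2) := by
        rw [show ε - ε*ε = ε*(1-ε) by ring, Real.mul_rpow hε0.le (by linarith)]
      have h2 := mul_min_of_nonneg ((1-ε)^(H-1/2)) 1 hεα.le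
      rw [h1, h2, mul_one]
    rw [hminC] at hC1
    have hsp : (ε*ε)^(H+1/2) = ε^(H+1/2) * ε^(H+1/2) := Real.mul_rpow hε0.le hε0.le
    have hmin0 : (0:ℝ) ≤ min ((1-ε)^(H-1/2)) 1 :=
      le_min (Real.rpow_nonneg (by linarith) _) zero_le_one
    have hlD0 : 0 ≤ min ((1-ε)^(H-1/2)) 1 * (ε^(H+1/2)/(H+1/2)) :=
      mul_nonneg hmin0 (div_nonneg (Real.rpow_nonneg hε0.le _) hp.le)
    have hC0 : 0 ≤ cH H (ε*ε) ε :=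
      le_trans (mul_nonneg (mul_nonneg hεα.le hmin0)
        (div_nonneg (Real.rpow_nonneg hs0.le _) hp.le)) hC1
    have hCD : (ε^(H-1/2) * min ((1-ε)^(H-1/2)) 1 * ((ε*ε)^(H+1/2)/(H+1/2)))
          * (min ((1-ε)^(H-1/2)) 1 * (ε^(H+1/2)/(H+1/2)))
        ≤ cH H (ε*ε) ε * cH H ε 1 :=
      mul_le_mul hC1 hD1 hlD0 hC0
    have hAB : cH H (ε*ε) 1 * cH H ε ε
        ≤ max ((1-ε*ε)^(H-1/2)) 1 * ((ε*ε)^(H+1/2)/(H+1/2)) * (ε^(2*H)/(2*H)) := by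
      rw [hB]
      exact mul_le_mul_of_nonneg_right hA2 (div_nonneg (Real.rpow_nonneg hε0.le _) h2H.le)
    have e1 : ε^(H-1/2) * ((ε*ε)^(H+1/2)/(H+1/2)) * (ε^(H+1/2)/(H+1/2))
        = ε^(4*H+1) * ((H+1/2)⁻¹ * (H+1/2)⁻¹) := by
      rw [hsp, show ε^(H-1/2) * (ε^(H+1/2)*ε^(H+1/2)/(H+1/2)) * (ε^(H+1/2)/(H+1/2))
        = ε^(H-1/2) * ε^(H+1/2) * ε^(H+1/2) * ε^(H+1/2) * ((H+1/2)⁻¹ * (H+1/2)⁻¹) by ring,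
        ← Real.rpow_add hε0, ← Real.rpow_add hε0, ← Real.rpow_add hε0,
        show H-1/2+(H+1/2)+(H+1/2)+(H+1/2) = 4*H+1 by ring]
    have e2 : (ε*ε)^(H+1/2)/(H+1/2) * (ε^(2*H)/(2*H))
        = ε^(4*H+1) * ((H+1/2)⁻¹ * (2*H)⁻¹) := by
      rw [hsp, show ε^(H+1/2)*ε^(H+1/2)/(H+1/2) * (ε^(2*H)/(2*H))
        = ε^(H+1/2)*ε^(H+1/2)*ε^(2*H) * ((H+1/2)⁻¹ * (2*H)⁻¹) by ring,
        ← Real.rpow_add hε0, ← Real.rpow_add hε0,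
        show H+1/2+(H+1/2)+2*H = 4*H+1 by ring]
    have hL : (ε^(H-1/2) * min ((1-ε)^(H-1/2)) 1 * ((ε*ε)^(H+1/2)/(H+1/2)))
          * (min ((1-ε)^(H-1/2)) 1 * (ε^(H+1/2)/(H+1/2)))
        = (min ((1-ε)^(H-1/2)) 1)^2 * (ε^(4*H+1) * ((H+1/2)⁻¹ * (H+1/2)⁻¹)) := by
      rw [← e1]; ring
    have hR : max ((1-ε*ε)^(H-1/2)) 1 * ((ε*ε)^(H+1/2)/(H+1/2)) * (ε^(2*H)/(2*H))
        = max ((1-ε*ε)^(H-1/2)) 1 * (ε^(4*H+1) * ((H+1/2)⁻¹ * (2*H)⁻¹)) := by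
      rw [← e2]; ring
    have hP : (0:ℝ) < ε^(4*H+1) := Real.rpow_pos_of_pos hε0 _
    have fpos : (0:ℝ) < ε^(4*H+1) * ((H+1/2)⁻¹ * ((H+1/2)⁻¹ * (2*H)⁻¹)) :=
      mul_pos hP (mul_pos (inv_pos.2 hp) (mul_pos (inv_pos.2 hp) (inv_pos.2 h2H)))
    have h1 : max ((1-ε*ε)^(H-1/2)) 1 * (H+1/2)
        < 2*H*((min ((1-ε)^(H-1/2)) 1)^2) := by linarith
    have hmid : max ((1-ε*ε)^(H-1/2)) 1 * (ε^(4*H+1) * ((H+1/2)⁻¹ * (2*H)⁻¹))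
        < (min ((1-ε)^(H-1/2)) 1)^2 * (ε^(4*H+1) * ((H+1/2)⁻¹ * (H+1/2)⁻¹)) := by
      have eL : max ((1-ε*ε)^(H-1/2)) 1 * (ε^(4*H+1) * ((H+1/2)⁻¹ * (2*H)⁻¹))
          = (max ((1-ε*ε)^(H-1/2)) 1 * (H+1/2))
            * (ε^(4*H+1) * ((H+1/2)⁻¹ * ((H+1/2)⁻¹ * (2*H)⁻¹))) := by
        rw [show (max ((1-ε*ε)^(H-1/2)) 1 * (H+1/2))
            * (ε^(4*H+1) * ((H+1/2)⁻¹ * ((H+1/2)⁻¹ * (2*H)⁻¹)))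
          = ((H+1/2)*(H+1/2)⁻¹) * (max ((1-ε*ε)^(H-1/2)) 1
            * (ε^(4*H+1) * ((H+1/2)⁻¹ * (2*H)⁻¹))) by ring,
          mul_inv_cancel₀ hp.ne', one_mul]
      have eR : (min ((1-ε)^(H-1/2)) 1)^2 * (ε^(4*H+1) * ((H+1/2)⁻¹ * (H+1/2)⁻¹))
          = (2*H*((min ((1-ε)^(H-1/2)) 1)^2))
            * (ε^(4*H+1) * ((H+1/2)⁻¹ * ((H+1/2)⁻¹ * (2*H)⁻¹))) := by
        rw [show (2*H*((min ((1-ε)^(H-1/2)) 1)^2))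
            * (ε^(4*H+1) * ((H+1/2)⁻¹ * ((H+1/2)⁻¹ * (2*H)⁻¹)))
          = ((2*H)*(2*H)⁻¹) * ((min ((1-ε)^(H-1/2)) 1)^2
            * (ε^(4*H+1) * ((H+1/2)⁻¹ * (H+1/2)⁻¹))) by ring,
          mul_inv_cancel₀ h2H.ne', one_mul]
      rw [eL, eR]
      exact mul_lt_mul_of_pos_right h1 fpos
    have hfin : cH H (ε*ε) 1 * cH H ε ε < cH H (ε*ε) ε * cH H ε 1 :=
      lt_of_le_of_lt (hAB.trans_eq hR) (lt_of_lt_of_le (hmid.trans_eq hL.symm) hCD)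
    exact hfin.ne
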